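/- Let Λ be an atomistic complete lattice and N a natural number. In the complete lattice Fin N → Λ with the pointwise order, every tuple f : Fin N → Λ satisfying f i ≠ ⊥ for all i is the supremum of the tuples of atoms below it: f = sSup {g : Fin N → Λ | (∀ i, IsAtom (g i)) ∧ g ≤ f}. -/
import Mathlib


/-- If `Λ` is an atomistic complete lattice, then in the pointwise-ordered
complete lattice `Fin N → Λ`, every tuple with no `⊥` component is the
supremum of the tuples of atoms below it (this is the paper's claim that
`Λ^N` is atomistic with atoms `Atoms(Λ)^N`). -/
theorem pi_eq_sSup_atom_tuples {Λ : Type*} [CompleteLattice Λ] [IsAtomistic Λ]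
    (N : ℕ) (f : Fin N → Λ) (hf : ∀ i, f i ≠ ⊥) :
    f = sSup {g : Fin N → Λ | (∀ i, IsAtom (g i)) ∧ g ≤ f} := by
  -- choose an atom below each component
  have hex : ∀ j, ∃ a : Λ, IsAtom a ∧ a ≤ f j := fun j => by
    haveI : IsAtomic Λ := inferInstance
    exact (eq_bot_or_exists_atom_le (f j)).resolve_left (hf j)
  choose a ha haf using hex
  apply le_antisymm
  · intro i
    rw [← sSup_atoms_le_eq (f i)]
    apply sSup_le
    rintro b ⟨hb, hbf⟩
    -- build tuple g with g i = b, g j = a j otherwise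
    have : (fun j => if j = i then b else a j) ∈
        {g : Fin N → Λ | (∀ i, IsAtom (g i)) ∧ g ≤ f} := by
      constructor
      · intro j
        by_cases h : j = i <;> simp [h, hb, ha]
      · intro j
        by_cases h : j = i
        · subst h; simpa using hbf
        · simpa [h] using haf j
    calc b = (fun j => if j = i then b else a j) i := by simp
      _ ≤ sSup {g : Fin N → Λ | (∀ i, IsAtom (g i)) ∧ g ≤ f} i := by
          exact le_sSup this i
  · exact sSup_le fun g hg => hg.2
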